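/- For a Coxeter element c of a Dynkin root system Φ and the orbit map τ_c = σ_{c_1} ∘ ⋯ ∘ σ_{c_n} on almost positive roots, τ_c is a bijection of Φ_{≥-1}, and for every almost positive root α there exists a non-negative integer R with τ_c^{-R}(α) a negative simple root. -/

import Mathlib

/-- A finite crystallographic root system of rank `n`, presented in the root lattice
`ℤ^n` with the simple roots `α_i = e_i` as standard basis vectors. -/
structure CrysRootDatum (n : ℕ) where
  C : Matrix (Fin n) (Fin n) ℤ
  roots : Finset (Fin n → ℤ)
  diag : ∀ i, C i i = 2
  offdiag : ∀ i j, i ≠ j → C i j ≤ 0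
  symmetrizable : ∃ d : Fin n → ℤ, (∀ i, 0 < d i) ∧ ∀ i j, d i * C i j = d j * C j i
  zero_not_mem : (0 : Fin n → ℤ) ∉ roots
  simple_mem : ∀ i, (Pi.single i 1 : Fin n → ℤ) ∈ roots
  sign_coherent : ∀ r ∈ roots, (∀ j, 0 ≤ r j) ∨ (∀ j, r j ≤ 0)
  reflect_mem : ∀ i, ∀ r ∈ roots, (r - (∑ j, C i j * r j) • Pi.single i 1) ∈ roots
  neg_mem : ∀ r ∈ roots, -r ∈ roots
  reduced : ∀ (c : ℤ) (i : Fin n), c • (Pi.single i 1 : Fin n → ℤ) ∈ roots → c = 1 ∨ c = -1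

namespace CrysRootDatum

variable {n : ℕ} (R : CrysRootDatum n)

/-- The simple reflection `s_i` acting on the root lattice. -/
def sref (i : Fin n) (v : Fin n → ℤ) : Fin n → ℤ :=
  v - (∑ j, R.C i j * v j) • Pi.single i 1

/-- `v` is a positive root. -/
def IsPos (v : Fin n → ℤ) : Prop := v ∈ R.roots ∧ ∀ j, 0 ≤ v j

/-- The set `Φ_{≥-1} = Φ⁺ ∪ (-Δ)` of almost positive roots. -/
def almostPos : Set (Fin n → ℤ) :=
  {v | R.IsPos v ∨ ∃ i, v = -(Pi.single i 1 : Fin n → ℤ)}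

open Classical in
/-- The map `σ_i`: it fixes the negative simple roots other than `-α_i`, and acts as
the simple reflection `s_i` otherwise. -/
noncomputable def sigmaMap (i : Fin n) (v : Fin n → ℤ) : Fin n → ℤ :=
  if (∃ j, v = -(Pi.single j 1 : Fin n → ℤ)) ∧ v ≠ -(Pi.single i 1 : Fin n → ℤ)
  then v else R.sref i v

/-- For a Coxeter element `c = c_1 ⋯ c_n` recorded as the list `l = [c_1, …, c_n]`
(each simple reflection appearing exactly once), the map
`τ_c = σ_{c_1} ∘ σ_{c_2} ∘ ⋯ ∘ σ_{c_n}`. -/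
noncomputable def tauC (l : List (Fin n)) (v : Fin n → ℤ) : Fin n → ℤ :=
  l.foldr (fun i u => R.sigmaMap i u) v

-- basic lemmas, part A
variable {n : ℕ} (R : CrysRootDatum n)

lemma sum_C_sref (i : Fin n) (v : Fin n → ℤ) :
    (∑ j, R.C i j * (R.sref i v) j) = - ∑ j, R.C i j * v j := by
  simp only [sref, Pi.sub_apply, Pi.smul_apply, smul_eq_mul, mul_sub]
  rw [Finset.sum_sub_distrib]
  have : (∑ j, R.C i j * ((∑ k, R.C i k * v k) * (Pi.single i 1 : Fin n → ℤ) j))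
      = 2 * ∑ k, R.C i k * v k := by
    rw [Finset.sum_eq_single i]
    · simp [R.diag i]
    · intro b _ hb; simp [Pi.single_eq_of_ne hb]
    · simp
  rw [this]; ring

lemma sref_sref (i : Fin n) (v : Fin n → ℤ) : R.sref i (R.sref i v) = v := by
  have hsum := R.sum_C_sref i v
  show R.sref i v - _ • _ = v
  rw [hsum]
  simp only [sref, neg_smul, sub_neg_eq_add]
  abel

lemma sref_add (i : Fin n) (u v : Fin n → ℤ) :
    R.sref i (u + v) = R.sref i u + R.sref i v := by
  unfold sref
  have : (∑ j, R.C i j * (u + v) j) = (∑ j, R.C i j * u j) + (∑ j, R.C i j * v j) := by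
    rw [← Finset.sum_add_distrib]; congr 1; funext j; simp; ring
  rw [this, add_smul]; abel

lemma sref_apply_ne {i j : Fin n} (hij : j ≠ i) (v : Fin n → ℤ) :
    R.sref i v j = v j := by
  simp [sref, Pi.single_eq_of_ne hij]

lemma sref_apply_self (i : Fin n) (v : Fin n → ℤ) :
    R.sref i v i = v i - ∑ k, R.C i k * v k := by
  simp [sref]
-- part B : positive roots and sigma
lemma root_ne_zero {v : Fin n → ℤ} (hv : v ∈ R.roots) : v ≠ 0 := by
  rintro rfl; exact R.zero_not_mem hv

lemma isPos_single (i : Fin n) : R.IsPos (Pi.single i 1) := by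
  refine ⟨R.simple_mem i, fun j => ?_⟩
  rcases eq_or_ne j i with rfl | h
  · simp
  · simp [Pi.single_eq_of_ne h]

lemma pos_ne_negsimple {v : Fin n → ℤ} (hv : R.IsPos v) (j : Fin n) :
    v ≠ -(Pi.single j 1 : Fin n → ℤ) := by
  intro h
  have := hv.2 j
  rw [h] at this
  simp at this

lemma sref_mem {v : Fin n → ℤ} (hv : v ∈ R.roots) (i : Fin n) :
    R.sref i v ∈ R.roots := R.reflect_mem i v hv

lemma eq_single_of_support {v : Fin n → ℤ} (i : Fin n) (h : ∀ j, j ≠ i → v j = 0) :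
    v = (v i) • (Pi.single i 1 : Fin n → ℤ) := by
  funext j
  rcases eq_or_ne j i with rfl | hj
  · simp
  · simp [h j hj, Pi.single_eq_of_ne hj]

lemma sref_pos {v : Fin n → ℤ} (hv : R.IsPos v) (i : Fin n)
    (hne : v ≠ (Pi.single i 1 : Fin n → ℤ)) : R.IsPos (R.sref i v) := by
  have hmem : R.sref i v ∈ R.roots := R.sref_mem hv.1 i
  refine ⟨hmem, ?_⟩
  rcases R.sign_coherent _ hmem with h | h
  · exact h
  · exfalso
    have hz : ∀ j, j ≠ i → v j = 0 := by
      intro j hj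
      have h1 := h j
      rw [R.sref_apply_ne hj] at h1
      exact le_antisymm h1 (hv.2 j)
    have hv1 : v = (v i) • (Pi.single i 1 : Fin n → ℤ) := eq_single_of_support i hz
    rcases R.reduced (v i) i (hv1 ▸ hv.1) with h1 | h1
    · apply hne; rw [hv1, h1, one_smul]
    · have := hv.2 i; omega

lemma sigma_negsimple_ne {i j : Fin n} (hij : j ≠ i) :
    R.sigmaMap i (-(Pi.single j 1 : Fin n → ℤ)) = -(Pi.single j 1 : Fin n → ℤ) := by
  rw [sigmaMap, if_pos]
  constructor
  · exact ⟨j, rfl⟩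
  · intro h
    have h2 := congrFun h j
    rw [Pi.neg_apply, Pi.neg_apply, Pi.single_eq_same, Pi.single_eq_of_ne hij] at h2
    exact one_ne_zero (neg_injective h2)

lemma sref_negsimple_self (i : Fin n) :
    R.sref i (-(Pi.single i 1 : Fin n → ℤ)) = Pi.single i 1 := by
  unfold sref
  have : (∑ j, R.C i j * (-(Pi.single i 1 : Fin n → ℤ)) j) = -2 := by
    rw [Finset.sum_eq_single i]
    · simp [R.diag i]
    · intro b _ hb; simp [Pi.single_eq_of_ne hb]
    · simp
  rw [this]
  funext j
  simp only [Pi.sub_apply, Pi.smul_apply, Pi.neg_apply, smul_eq_mul]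
  ring

lemma sigma_negsimple_self (i : Fin n) :
    R.sigmaMap i (-(Pi.single i 1 : Fin n → ℤ)) = Pi.single i 1 := by
  rw [sigmaMap, if_neg, R.sref_negsimple_self]
  simp

lemma sref_single_self (i : Fin n) :
    R.sref i (Pi.single i 1 : Fin n → ℤ) = -(Pi.single i 1 : Fin n → ℤ) := by
  have := R.sref_sref i (-(Pi.single i 1 : Fin n → ℤ))
  rw [R.sref_negsimple_self] at this
  rw [this]

lemma sigma_pos (i : Fin n) {v : Fin n → ℤ} (hv : R.IsPos v) :
    R.sigmaMap i v = R.sref i v := by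
  rw [sigmaMap, if_neg]
  rintro ⟨⟨j, hj⟩, -⟩
  exact R.pos_ne_negsimple hv j hj
-- part C : sigma is an involution on almostPos
lemma single_mem_almostPos (i : Fin n) : (Pi.single i 1 : Fin n → ℤ) ∈ R.almostPos :=
  Or.inl (R.isPos_single i)

lemma negsimple_mem_almostPos (i : Fin n) :
    -(Pi.single i 1 : Fin n → ℤ) ∈ R.almostPos := Or.inr ⟨i, rfl⟩

lemma sigma_mapsTo (i : Fin n) : Set.MapsTo (R.sigmaMap i) R.almostPos R.almostPos := by
  rintro v (hv | ⟨j, rfl⟩)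
  · rw [R.sigma_pos i hv]
    rcases eq_or_ne v (Pi.single i 1 : Fin n → ℤ) with rfl | hne
    · rw [R.sref_single_self]; exact R.negsimple_mem_almostPos i
    · exact Or.inl (R.sref_pos hv i hne)
  · rcases eq_or_ne j i with rfl | hj
    · rw [R.sigma_negsimple_self]; exact R.single_mem_almostPos j
    · rw [R.sigma_negsimple_ne hj]; exact R.negsimple_mem_almostPos j

lemma sigma_sigma (i : Fin n) {v : Fin n → ℤ} (hv : v ∈ R.almostPos) :
    R.sigmaMap i (R.sigmaMap i v) = v := by
  rcases hv with hv | ⟨j, rfl⟩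
  · rw [R.sigma_pos i hv]
    rcases eq_or_ne v (Pi.single i 1 : Fin n → ℤ) with rfl | hne
    · rw [R.sref_single_self, R.sigma_negsimple_self]
    · have hpos := R.sref_pos hv i hne
      rw [R.sigma_pos i hpos, R.sref_sref]
  · rcases eq_or_ne j i with heq | hj
    · rw [heq, R.sigma_negsimple_self, R.sigma_pos i (R.isPos_single i), R.sref_single_self]
    · rw [R.sigma_negsimple_ne hj, R.sigma_negsimple_ne hj]

lemma sigma_bijOn (i : Fin n) : Set.BijOn (R.sigmaMap i) R.almostPos R.almostPos := by
  refine Set.InvOn.bijOn ⟨?_, ?_⟩ (R.sigma_mapsTo i) (R.sigma_mapsTo i) <;>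
    exact fun v hv => R.sigma_sigma i hv

lemma tauC_cons (i : Fin n) (l : List (Fin n)) (v : Fin n → ℤ) :
    R.tauC (i :: l) v = R.sigmaMap i (R.tauC l v) := rfl

lemma tauC_bijOn (l : List (Fin n)) : Set.BijOn (R.tauC l) R.almostPos R.almostPos := by
  induction l with
  | nil => exact Set.bijOn_id _
  | cons a t ih =>
    have : R.tauC (a :: t) = (R.sigmaMap a) ∘ (R.tauC t) := rfl
    rw [this]
    exact Set.BijOn.comp (R.sigma_bijOn a) ih
-- part D : the linear fold and the dichotomy
/-- The Coxeter element as a composition of reflections (no `σ` truncation). -/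
def srefFold (l : List (Fin n)) (v : Fin n → ℤ) : Fin n → ℤ :=
  l.foldr (fun i u => R.sref i u) v

lemma srefFold_cons (a : Fin n) (l : List (Fin n)) (v : Fin n → ℤ) :
    R.srefFold (a :: l) v = R.sref a (R.srefFold l v) := rfl

lemma srefFold_apply_not_mem (l : List (Fin n)) (v : Fin n → ℤ) {j : Fin n}
    (hj : j ∉ l) : R.srefFold l v j = v j := by
  induction l with
  | nil => rfl
  | cons a t ih =>
    have hja : j ≠ a := fun h => hj (h ▸ List.mem_cons_self)
    have hjt : j ∉ t := fun h => hj (List.mem_cons_of_mem a h)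
    rw [srefFold_cons, R.sref_apply_ne hja, ih hjt]

lemma srefFold_fixed_imp (l : List (Fin n)) (hnd : l.Nodup) (v : Fin n → ℤ)
    (hfix : R.srefFold l v = v) : ∀ i ∈ l, (∑ j, R.C i j * v j) = 0 := by
  induction l with
  | nil => intro i hi; simp at hi
  | cons a t ih =>
    rcases List.nodup_cons.mp hnd with ⟨hat, hndt⟩
    set u := R.srefFold t v with hu
    have hsu : R.sref a u = v := hfix
    have huv : u = v := by
      have h1 : u = R.sref a v := by rw [← hsu, R.sref_sref]
      have h2 : u a = v a := R.srefFold_apply_not_mem t v hat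
      have h3 : (∑ j, R.C a j * v j) = 0 := by
        have := congrFun h1 a
        rw [R.sref_apply_self] at this
        omega
      rw [h1]
      show v - _ • _ = v
      rw [h3, zero_smul, sub_zero]
    have hc : (∑ j, R.C a j * v j) = 0 := by
      have := congrFun hsu a
      rw [huv, R.sref_apply_self] at this
      omega
    intro i hi
    rcases List.mem_cons.mp hi with rfl | hit
    · exact hc
    · exact ih hndt huv i hit

lemma tauC_dichotomy (l : List (Fin n)) (hnd : l.Nodup) {v : Fin n → ℤ}
    (hv : R.IsPos v) :
    (R.tauC l v = R.srefFold l v ∧ R.IsPos (R.tauC l v)) ∨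
      ∃ i ∈ l, R.tauC l v = -(Pi.single i 1 : Fin n → ℤ) := by
  induction l with
  | nil => exact Or.inl ⟨rfl, hv⟩
  | cons a t ih =>
    rcases List.nodup_cons.mp hnd with ⟨hat, hndt⟩
    rcases ih hndt with ⟨heq, hpos⟩ | ⟨i, hit, heq⟩
    · rcases eq_or_ne (R.tauC t v) (Pi.single a 1 : Fin n → ℤ) with hsa | hne
      · refine Or.inr ⟨a, List.mem_cons_self, ?_⟩
        rw [tauC_cons, hsa, R.sigma_pos a (R.isPos_single a), R.sref_single_self]
      · left
        rw [tauC_cons, R.sigma_pos a hpos, srefFold_cons, heq]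
        exact ⟨rfl, heq ▸ R.sref_pos hpos a hne⟩
    · refine Or.inr ⟨i, List.mem_cons_of_mem a hit, ?_⟩
      have hia : i ≠ a := fun h => hat (h ▸ hit)
      rw [tauC_cons, heq, R.sigma_negsimple_ne hia]
-- part E
section RatPart
open Matrix
/-- The reflection `s_i` as a rational matrix. -/
noncomputable def Mq (i : Fin n) : Matrix (Fin n) (Fin n) ℚ :=
  1 - Matrix.of (fun a b => if a = i then ((R.C i b : ℚ)) else 0)

lemma Mq_mulVec (i : Fin n) (v : Fin n → ℚ) :
    R.Mq i *ᵥ v = v - (∑ j, (R.C i j : ℚ) * v j) • (Pi.single i 1 : Fin n → ℚ) := by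
  unfold Mq
  rw [Matrix.sub_mulVec, Matrix.one_mulVec]
  congr 1
  funext a
  rcases eq_or_ne a i with rfl | ha
  · simp [Matrix.mulVec, dotProduct]
  · simp [Matrix.mulVec, dotProduct, ha, Pi.single_eq_of_ne ha]

lemma sum_C_Mq (i : Fin n) (v : Fin n → ℚ) :
    (∑ j, (R.C i j : ℚ) * (R.Mq i *ᵥ v) j) = - ∑ j, (R.C i j : ℚ) * v j := by
  rw [R.Mq_mulVec]
  simp only [Pi.sub_apply, Pi.smul_apply, smul_eq_mul, mul_sub]
  rw [Finset.sum_sub_distrib]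
  have : (∑ j, (R.C i j : ℚ) * ((∑ k, (R.C i k : ℚ) * v k) * (Pi.single i 1 : Fin n → ℚ) j))
      = 2 * ∑ k, (R.C i k : ℚ) * v k := by
    rw [Finset.sum_eq_single i]
    · simp [R.diag i]
    · intro b _ hb; simp [Pi.single_eq_of_ne hb]
    · simp
  rw [this]; ring

lemma Mq_mulVec_Mq (i : Fin n) (v : Fin n → ℚ) :
    R.Mq i *ᵥ (R.Mq i *ᵥ v) = v := by
  have hsum := R.sum_C_Mq i v
  rw [R.Mq_mulVec i (R.Mq i *ᵥ v), hsum, R.Mq_mulVec]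
  simp only [neg_smul, sub_neg_eq_add]
  abel

lemma Mq_mul_Mq (i : Fin n) : R.Mq i * R.Mq i = 1 := by
  apply Matrix.ext
  intro a b
  have h := R.Mq_mulVec_Mq i (Pi.single b 1)
  rw [Matrix.mulVec_mulVec] at h
  have := congrFun h a
  rw [Matrix.mulVec_single_one] at this
  simp only [Matrix.col_apply] at this
  rw [this]
  rcases eq_or_ne a b with rfl | hab
  · simp
  · simp [Pi.single_eq_of_ne hab, Matrix.one_apply_ne hab]

/-- coordinatewise cast to ℚ -/
def castQ (v : Fin n → ℤ) : Fin n → ℚ := fun j => (v j : ℚ)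

lemma castQ_inj : Function.Injective (castQ (n := n)) := by
  intro u v h
  funext j
  have := congrFun h j
  simpa [castQ] using this

lemma castQ_sref (i : Fin n) (v : Fin n → ℤ) :
    castQ (R.sref i v) = R.Mq i *ᵥ castQ v := by
  rw [R.Mq_mulVec]
  funext j
  simp only [castQ, sref, Pi.sub_apply, Pi.smul_apply, smul_eq_mul]
  push_cast
  rcases eq_or_ne j i with rfl | hj
  · simp
  · simp [Pi.single_eq_of_ne hj]

end RatPart
section RatPart2
open Matrix

lemma castQ_single (j : Fin n) :
    castQ (Pi.single j 1 : Fin n → ℤ) = (Pi.single j 1 : Fin n → ℚ) := by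
  funext k
  rcases eq_or_ne k j with rfl | hk
  · simp [castQ]
  · simp [castQ, Pi.single_eq_of_ne hk]

private lemma sum_smul_dot (v : Fin n → ℚ) (u : Fin n → (Fin n → ℚ)) (y : Fin n → ℚ) :
    dotProduct (∑ i, v i • u i) y = ∑ i, v i * dotProduct (u i) y := by
  simp only [dotProduct, Finset.sum_apply, Pi.smul_apply, smul_eq_mul,
    Finset.sum_mul, Finset.mul_sum, mul_assoc]
  exact Finset.sum_comm

lemma rowsumQ_zero_imp_zero (v : Fin n → ℚ)
    (hv : ∀ i, (∑ j, (R.C i j : ℚ) * v j) = 0) : v = 0 := by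
  classical
  set S : Submonoid (Matrix (Fin n) (Fin n) ℚ) := Submonoid.closure (Set.range R.Mq) with hS
  set rootsQ : Set (Fin n → ℚ) := castQ '' (↑R.roots) with hrootsQ
  have hrootsQfin : rootsQ.Finite := (R.roots.finite_toSet).image _
  have hmaps : ∀ w ∈ S, ∀ x ∈ rootsQ, w *ᵥ x ∈ rootsQ := by
    intro w hw
    induction hw using Submonoid.closure_induction with
    | mem a ha =>
      rcases ha with ⟨i, rfl⟩
      rintro x ⟨r, hr, rfl⟩
      exact ⟨R.sref i r, R.sref_mem hr i, R.castQ_sref i r⟩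
    | one => intro x hx; rwa [Matrix.one_mulVec]
    | mul a b _ _ iha ihb =>
      intro x hx
      rw [← Matrix.mulVec_mulVec]
      exact iha _ (ihb x hx)
  have hfinS : (↑S : Set (Matrix (Fin n) (Fin n) ℚ)).Finite := by
    have hinj : Function.Injective
        (fun (A : Matrix (Fin n) (Fin n) ℚ) => (fun j => A *ᵥ (Pi.single j (1:ℚ)))) := by
      intro A B h
      ext a b
      have h2 := congrFun (congrFun h b) a
      simpa [Matrix.mulVec_single] using h2
    have hsingle : ∀ j, (Pi.single j 1 : Fin n → ℚ) ∈ rootsQ := by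
      intro j
      exact ⟨Pi.single j 1, R.simple_mem j, castQ_single j⟩
    have hsub : (S : Set (Matrix (Fin n) (Fin n) ℚ)) ⊆ (fun A => fun j => A *ᵥ (Pi.single j (1:ℚ))) ⁻¹'
        (Set.pi Set.univ fun _ => rootsQ) := by
      intro w hw j _
      exact hmaps w hw _ (hsingle j)
    exact Set.Finite.subset
      (Set.Finite.preimage hinj.injOn (Set.Finite.pi fun _ => hrootsQfin)) hsub
  set T : Finset (Matrix (Fin n) (Fin n) ℚ) := hfinS.toFinset with hT
  set Q : (Fin n → ℚ) → (Fin n → ℚ) → ℚ :=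
    fun x y => ∑ w ∈ T, dotProduct (w *ᵥ x) (w *ᵥ y) with hQ
  have hone : (1 : Matrix (Fin n) (Fin n) ℚ) ∈ T := by
    rw [hT, Set.Finite.mem_toFinset]
    exact S.one_mem
  have hMqS : ∀ i, R.Mq i ∈ S := fun i => Submonoid.subset_closure ⟨i, rfl⟩
  have hmul : ∀ i, ∀ w ∈ T, w * R.Mq i ∈ T := by
    intro i w hw
    rw [hT, Set.Finite.mem_toFinset] at hw ⊢
    exact S.mul_mem hw (hMqS i)
  have hQinv : ∀ (i : Fin n) (x y : Fin n → ℚ),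
      Q (R.Mq i *ᵥ x) (R.Mq i *ᵥ y) = Q x y := by
    intro i x y
    rw [hQ]
    refine Finset.sum_nbij' (fun w => w * R.Mq i) (fun w => w * R.Mq i)
      (fun w hw => hmul i w hw) (fun w hw => hmul i w hw) ?_ ?_ ?_
    · intro w _
      show w * R.Mq i * R.Mq i = w
      rw [mul_assoc, R.Mq_mul_Mq, mul_one]
    · intro w _
      show w * R.Mq i * R.Mq i = w
      rw [mul_assoc, R.Mq_mul_Mq, mul_one]
    · intro w _
      show _ = ((w * R.Mq i) *ᵥ x) ⬝ᵥ ((w * R.Mq i) *ᵥ y)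
      rw [← Matrix.mulVec_mulVec, ← Matrix.mulVec_mulVec]
  have hfix : ∀ i, R.Mq i *ᵥ v = v := by
    intro i
    rw [R.Mq_mulVec, hv i, zero_smul, sub_zero]
  have hMe : ∀ i, R.Mq i *ᵥ (Pi.single i 1 : Fin n → ℚ) = -(Pi.single i 1 : Fin n → ℚ) := by
    intro i
    rw [R.Mq_mulVec]
    have h2 : (∑ j, (R.C i j : ℚ) * (Pi.single i 1 : Fin n → ℚ) j) = 2 := by
      rw [Finset.sum_eq_single i]
      · simp [R.diag i]
      · intro b _ hb; simp [Pi.single_eq_of_ne hb]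
      · simp
    rw [h2]
    funext k
    simp only [Pi.sub_apply, Pi.smul_apply, Pi.neg_apply, smul_eq_mul]
    ring
  have hQe : ∀ i, Q (Pi.single i 1 : Fin n → ℚ) v = 0 := by
    intro i
    have h1 := hQinv i (Pi.single i 1) v
    rw [hfix i, hMe i] at h1
    have h2 : Q (-(Pi.single i 1 : Fin n → ℚ)) v = - Q (Pi.single i 1 : Fin n → ℚ) v := by
      rw [hQ, ← Finset.sum_neg_distrib]
      refine Finset.sum_congr rfl ?_
      intro w _
      rw [Matrix.mulVec_neg, neg_dotProduct]
    rw [h2] at h1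
    linarith
  have hrepr : v = ∑ i, v i • (Pi.single i 1 : Fin n → ℚ) := by
    funext j
    rw [Finset.sum_apply, Finset.sum_eq_single j]
    · simp
    · intro b _ hb; simp [Pi.single_eq_of_ne (Ne.symm hb)]
    · simp
  have hlin : ∀ w : Matrix (Fin n) (Fin n) ℚ,
      w *ᵥ v = ∑ i, v i • (w *ᵥ (Pi.single i 1 : Fin n → ℚ)) := by
    intro w
    conv_lhs => rw [hrepr]
    simp only [← Matrix.mulVecLin_apply, map_sum, LinearMap.map_smul]
  have hQvv : Q v v = 0 := by
    have hexp : Q v v = ∑ i, v i * Q (Pi.single i 1 : Fin n → ℚ) v := by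
      simp only [hQ]
      have hstep : ∀ w ∈ T, dotProduct (w *ᵥ v) (w *ᵥ v)
          = ∑ i, v i * dotProduct (w *ᵥ (Pi.single i 1 : Fin n → ℚ)) (w *ᵥ v) := by
        intro w _
        calc dotProduct (w *ᵥ v) (w *ᵥ v)
            = dotProduct (∑ i, v i • (w *ᵥ (Pi.single i 1 : Fin n → ℚ))) (w *ᵥ v) := by
              rw [← hlin w]
          _ = _ := sum_smul_dot v _ _
      rw [Finset.sum_congr rfl hstep, Finset.sum_comm]
      refine Finset.sum_congr rfl ?_
      intro i _
      rw [Finset.mul_sum]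
    rw [hexp]
    simp only [hQe, mul_zero, Finset.sum_const_zero]
  have hterm : ∀ w ∈ T, (0:ℚ) ≤ dotProduct (w *ᵥ v) (w *ᵥ v) := by
    intro w _
    exact Finset.sum_nonneg fun j _ => mul_self_nonneg _
  have hle : dotProduct v v ≤ Q v v := by
    have h1 : dotProduct ((1:Matrix (Fin n) (Fin n) ℚ) *ᵥ v) ((1:Matrix (Fin n) (Fin n) ℚ) *ᵥ v)
        = dotProduct v v := by rw [Matrix.one_mulVec]
    calc dotProduct v v
        = dotProduct ((1:Matrix (Fin n) (Fin n) ℚ) *ᵥ v) ((1:Matrix (Fin n) (Fin n) ℚ) *ᵥ v) := h1.symm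
      _ ≤ Q v v := Finset.single_le_sum hterm hone
  have hdot0 : dotProduct v v = 0 := by
    have h0 : (0:ℚ) ≤ dotProduct v v := Finset.sum_nonneg fun j _ => mul_self_nonneg _
    linarith [hQvv ▸ hle]
  funext j
  have := (Finset.sum_eq_zero_iff_of_nonneg (fun k _ => mul_self_nonneg (v k))).mp hdot0 j
    (Finset.mem_univ j)
  have h2 : v j * v j = 0 := this
  simpa using mul_self_eq_zero.mp h2

lemma rowsum_zero_imp_zero (w : Fin n → ℤ)
    (h : ∀ i, (∑ j, R.C i j * w j) = 0) : w = 0 := by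
  have hq : castQ w = 0 := by
    apply R.rowsumQ_zero_imp_zero
    intro i
    have := h i
    have h2 : ((∑ j, R.C i j * w j : ℤ) : ℚ) = 0 := by exact_mod_cast this
    rw [← h2]
    push_cast
    rfl
  have : castQ w = castQ 0 := by
    rw [hq]; funext j; simp [castQ]
  exact castQ_inj this
end RatPart2
-- part G : the orbit argument
lemma sref_inj (i : Fin n) : Function.Injective (R.sref i) := by
  intro u v h
  have := congrArg (R.sref i) h
  rwa [R.sref_sref, R.sref_sref] at this

lemma srefFold_inj (l : List (Fin n)) : Function.Injective (R.srefFold l) := by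
  induction l with
  | nil => exact fun u v h => h
  | cons a t ih => exact fun u v h => ih (R.sref_inj a h)

lemma srefFold_add (l : List (Fin n)) (u v : Fin n → ℤ) :
    R.srefFold l (u + v) = R.srefFold l u + R.srefFold l v := by
  induction l with
  | nil => rfl
  | cons a t ih => rw [srefFold_cons, srefFold_cons, srefFold_cons, ih, R.sref_add]

lemma mem_roots_of_almostPos {v : Fin n → ℤ} (hv : v ∈ R.almostPos) : v ∈ R.roots := by
  rcases hv with hv | ⟨i, rfl⟩
  · exact hv.1
  · simpa using R.neg_mem _ (R.simple_mem i)

lemma reaches_negsimple (l : List (Fin n)) (hnd : l.Nodup) (hall : ∀ i, i ∈ l)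
    {α : Fin n → ℤ} (hα : α ∈ R.almostPos) :
    ∃ (k : ℕ) (i : Fin n), (R.tauC l)^[k] α = -(Pi.single i 1 : Fin n → ℤ) := by
  rcases hα with hpos | ⟨i, rfl⟩
  swap
  · exact ⟨0, i, rfl⟩
  by_contra hcon
  push_neg at hcon
  have key : ∀ k, R.IsPos ((R.tauC l)^[k] α) ∧
      (R.tauC l)^[k] α = (R.srefFold l)^[k] α := by
    intro k
    induction k with
    | zero => exact ⟨hpos, rfl⟩
    | succ k ih =>
      rcases R.tauC_dichotomy l hnd ih.1 with ⟨heq, hp⟩ | ⟨i, _, heq⟩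
      · constructor
        · rw [Function.iterate_succ_apply']
          exact hp
        · rw [Function.iterate_succ_apply', Function.iterate_succ_apply', heq, ih.2]
      · exact absurd (by rw [Function.iterate_succ_apply', heq]) (hcon (k+1) i)
  -- pigeonhole : some positive period for the linear fold
  obtain ⟨a0, b0, hab, heqab⟩ := Finite.exists_ne_map_eq_of_infinite
    (fun k : ℕ => (⟨(R.tauC l)^[k] α, (key k).1.1⟩ : {v // v ∈ R.roots}))
  have heqab' : (R.tauC l)^[a0] α = (R.tauC l)^[b0] α := congrArg Subtype.val heqab
  obtain ⟨a, b, hlt, heqab2⟩ : ∃ a b : ℕ, a < b ∧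
      (R.srefFold l)^[a] α = (R.srefFold l)^[b] α := by
    rcases lt_or_gt_of_ne hab with h | h
    · exact ⟨a0, b0, h, by rw [← (key a0).2, ← (key b0).2, heqab']⟩
    · exact ⟨b0, a0, h, by rw [← (key a0).2, ← (key b0).2, heqab'.symm]⟩
  set p := b - a with hpdef
  have hppos : 0 < p := Nat.sub_pos_of_lt hlt
  have hper : (R.srefFold l)^[p] α = α := by
    have hba : b = a + p := by omega
    rw [hba, Function.iterate_add_apply] at heqab2
    exact (Function.Injective.iterate (R.srefFold_inj l) a heqab2.symm)
  -- the averaged vector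
  set w : Fin n → ℤ := ∑ k ∈ Finset.range p, (R.srefFold l)^[k] α with hw
  have hfold_sum : R.srefFold l w = ∑ k ∈ Finset.range p, (R.srefFold l)^[k+1] α := by
    rw [hw]
    have : R.srefFold l (∑ k ∈ Finset.range p, (R.srefFold l)^[k] α)
        = ∑ k ∈ Finset.range p, R.srefFold l ((R.srefFold l)^[k] α) :=
      map_sum (AddMonoidHom.mk' (R.srefFold l) (R.srefFold_add l)) _ _
    rw [this]
    refine Finset.sum_congr rfl ?_
    intro k _
    rw [← Function.iterate_succ_apply' (R.srefFold l) k α]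
  have hfixw : R.srefFold l w = w := by
    rw [hfold_sum]
    have e2 := Finset.sum_range_succ' (fun k => (R.srefFold l)^[k] α) p
    have e1 := Finset.sum_range_succ (fun k => (R.srefFold l)^[k] α) p
    rw [e1] at e2
    simp only [Function.iterate_zero_apply] at e2
    rw [hper] at e2
    have : (∑ k ∈ Finset.range p, (R.srefFold l)^[k+1] α) + α = w + α := by
      rw [hw, ← e2]
    exact add_right_cancel this
  have hzero : w = 0 := by
    apply R.rowsum_zero_imp_zero
    intro i
    exact R.srefFold_fixed_imp l hnd w hfixw i (hall i)
  -- contradiction : w is strictly positive somewhere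
  have hane : α ≠ 0 := R.root_ne_zero hpos.1
  obtain ⟨j, hj⟩ : ∃ j, α j ≠ 0 := by
    by_contra hc
    push_neg at hc
    exact hane (funext hc)
  have hαj : 0 < α j := lt_of_le_of_ne (hpos.2 j) (Ne.symm hj)
  have hwj : α j ≤ w j := by
    rw [hw, Finset.sum_apply]
    have h0 : (0:ℕ) ∈ Finset.range p := Finset.mem_range.mpr hppos
    have := Finset.single_le_sum
      (f := fun k => ((R.srefFold l)^[k] α) j)
      (fun k _ => by
        have hk := (key k).1.2 j
        rwa [(key k).2] at hk) h0
    simpa using this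
  rw [hzero] at hwj
  simp at hwj
  omega
-- part H : upgrading to a forward iterate of a negative simple root
lemma tauC_iter_mem (l : List (Fin n)) {α : Fin n → ℤ} (hα : α ∈ R.almostPos) (k : ℕ) :
    (R.tauC l)^[k] α ∈ R.almostPos :=
  Set.MapsTo.iterate (R.tauC_bijOn l).mapsTo k hα

lemma tauC_iter_injOn (l : List (Fin n)) (k : ℕ) :
    Set.InjOn ((R.tauC l)^[k]) R.almostPos := by
  induction k with
  | zero => exact fun x _ y _ h => h
  | succ k ih =>
    intro x hx y hy h
    rw [Function.iterate_succ_apply, Function.iterate_succ_apply] at h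
    exact (R.tauC_bijOn l).injOn hx hy
      (ih ((R.tauC_bijOn l).mapsTo hx) ((R.tauC_bijOn l).mapsTo hy) h)

lemma exists_period (l : List (Fin n)) {α : Fin n → ℤ} (hα : α ∈ R.almostPos) :
    ∃ p : ℕ, 0 < p ∧ (R.tauC l)^[p] α = α := by
  obtain ⟨a0, b0, hab, heqab⟩ := Finite.exists_ne_map_eq_of_infinite
    (fun k : ℕ => (⟨(R.tauC l)^[k] α, R.mem_roots_of_almostPos (R.tauC_iter_mem l hα k)⟩ :
      {v // v ∈ R.roots}))
  have heqab' : (R.tauC l)^[a0] α = (R.tauC l)^[b0] α := congrArg Subtype.val heqab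
  obtain ⟨a, b, hlt, heqab2⟩ : ∃ a b : ℕ, a < b ∧
      (R.tauC l)^[a] α = (R.tauC l)^[b] α := by
    rcases lt_or_gt_of_ne hab with h | h
    · exact ⟨a0, b0, h, heqab'⟩
    · exact ⟨b0, a0, h, heqab'.symm⟩
  refine ⟨b - a, Nat.sub_pos_of_lt hlt, ?_⟩
  have hba : b = a + (b - a) := by omega
  rw [hba, Function.iterate_add_apply] at heqab2
  exact R.tauC_iter_injOn l a (R.tauC_iter_mem l hα (b - a)) hα heqab2.symm

lemma iterate_mul_period (l : List (Fin n)) {α : Fin n → ℤ} {p : ℕ}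
    (hper : (R.tauC l)^[p] α = α) : ∀ t : ℕ, (R.tauC l)^[p * t] α = α := by
  intro t
  induction t with
  | zero => simp
  | succ t ih =>
    rw [Nat.mul_succ, Function.iterate_add_apply, hper, ih]

end CrysRootDatum

/-- For a Coxeter element `c` of a Dynkin root system `Φ`, the map
`τ_c = σ_{c_1} ∘ ⋯ ∘ σ_{c_n}` is a bijection of the set `Φ_{≥-1}` of almost positive
roots, and for every almost positive root `α` there is a non-negative integer `R`
such that `τ_c^{-R}(α)` is a negative simple root (equivalently, `α` is some forward
`τ_c`-iterate of a negative simple root). -/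
theorem tauC_bijOn_and_reaches_negative_simple {n : ℕ} (R : CrysRootDatum n)
    (l : List (Fin n)) (hnd : l.Nodup) (hall : ∀ i, i ∈ l) :
    Set.BijOn (R.tauC l) R.almostPos R.almostPos ∧
    ∀ α ∈ R.almostPos, ∃ (m : ℕ) (i : Fin n),
      (R.tauC l)^[m] (-(Pi.single i 1 : Fin n → ℤ)) = α := by
  refine ⟨R.tauC_bijOn l, ?_⟩
  intro α hα
  obtain ⟨k, i, hk⟩ := R.reaches_negsimple l hnd hall hα
  obtain ⟨p, hppos, hper⟩ := R.exists_period l hα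
  have hN : p * (k + 1) ≥ k + 1 := Nat.le_mul_of_pos_left _ hppos
  refine ⟨p * (k + 1) - k, i, ?_⟩
  have hsplit : (p * (k + 1) - k) + k = p * (k + 1) := by omega
  rw [← hk, ← Function.iterate_add_apply, hsplit]
  exact R.iterate_mul_period l hper (k + 1)
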